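/- Let σ > 0, 0 < χ̂ < 2, and let U : ℝ → ℝ be non-increasing with 2/(2+χ̂) ≤ U(z) ≤ 1 for z ≤ 0 and U(z) = 0 for z > 0. Set P = ρ ⋆ U with ρ(x) = exp(-|x|/σ)/(2σ). Then for all z < σ·ln(1 - χ̂/2), one has σ·(P'(z) - P'(0)) ≥ (1/(2+χ̂))·(1 - χ̂/2 - exp(z/σ)) > 0. -/

import Mathlib

open MeasureTheory

noncomputable def P (σ : ℝ) (U : ℝ → ℝ) (z : ℝ) : ℝ :=
  (1 / (2 * σ)) * ∫ y, Real.exp (-|z - y| / σ) * U y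

namespace PressureAux


open Set Real Filter

lemma intInt (σ : ℝ) (hσ : σ ≠ 0) (a b : ℝ) :
    ∫ t in a..b, Real.exp (t / σ) = σ * (Real.exp (b / σ) - Real.exp (a / σ)) := by
  have := intervalIntegral.integral_comp_div (a := a) (b := b) (c := σ) (f := Real.exp) hσ
  rw [this, integral_exp, smul_eq_mul]

lemma intOn (σ : ℝ) (hσ : 0 < σ) (c : ℝ) :
    IntegrableOn (fun y => Real.exp (y / σ)) (Iic c) := by
  refine integrableOn_Iic_of_intervalIntegral_norm_bounded (σ * Real.exp (c / σ)) c
    (fun i => ((continuous_exp.comp (continuous_id.div_const σ)).integrableOn_Ioc))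
    tendsto_id (Eventually.of_forall fun y => ?_)
  simp_rw [norm_of_nonneg (exp_pos _).le, intInt σ hσ.ne']
  simp only [id]
  nlinarith [exp_pos (y / σ)]

lemma intIic (σ : ℝ) (hσ : 0 < σ) (c : ℝ) :
    ∫ y in Iic c, Real.exp (y / σ) = σ * Real.exp (c / σ) := by
  have hd : ∀ x ∈ Iio c, HasDerivAt (fun y => σ * Real.exp (y / σ)) (Real.exp (x / σ)) x := by
    intro x _
    have : HasDerivAt (fun y : ℝ => y / σ) (1 / σ) x := (hasDerivAt_id x).div_const σ
    have := (this.exp).const_mul σ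
    exact this.congr_deriv (by field_simp)
  have ht : Tendsto (fun y => σ * Real.exp (y / σ)) atBot (nhds 0) := by
    have h1 : Tendsto (fun y : ℝ => y / σ) atBot atBot := tendsto_id.atBot_div_const hσ
    have := (tendsto_exp_atBot.comp h1).const_mul σ
    simpa using this
  have := integral_Iic_of_hasDerivAt_of_tendsto
    (Continuous.continuousWithinAt (by continuity)) hd (intOn σ hσ c) ht
  rw [this]; ring

lemma intOn' (σ : ℝ) (hσ : 0 < σ) (c : ℝ) :
    IntegrableOn (fun y => Real.exp (-y / σ)) (Ioi c) := by
  refine integrableOn_Ioi_of_intervalIntegral_norm_bounded (σ * Real.exp (-c / σ)) c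
    (fun i => ((continuous_exp.comp ((continuous_id.neg).div_const σ)).integrableOn_Ioc))
    tendsto_id (Eventually.of_forall fun y => ?_)
  have hrw : ∀ t : ℝ, -t / σ = t / (-σ) := fun t => by rw [div_neg, neg_div]
  simp_rw [norm_of_nonneg (exp_pos _).le, hrw, intInt (-σ) (by linarith) c _]
  simp only [id]
  nlinarith [exp_pos ((y : ℝ) / (-σ))]

lemma int_exp_abs (σ : ℝ) (hσ : 0 < σ) (x : ℝ) :
    Integrable (fun y => Real.exp (-|x - y| / σ)) := by
  rw [← integrableOn_univ, ← Set.Iic_union_Ioi (a := x)]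
  refine IntegrableOn.union ?_ ?_
  · refine IntegrableOn.congr_fun ((intOn σ hσ x).div_const (Real.exp (x / σ))) ?_
      measurableSet_Iic
    intro y hy
    simp only [Set.mem_Iic] at hy
    simp only [← Real.exp_sub, ← sub_div, abs_of_nonneg (show (0:ℝ) ≤ x - y by linarith), neg_sub]
  · refine IntegrableOn.congr_fun ((intOn' σ hσ x).mul_const (Real.exp (x / σ))) ?_
      measurableSet_Ioi
    intro y hy
    simp only [Set.mem_Ioi] at hy
    simp only [← Real.exp_add, abs_of_nonpos (show x - y ≤ 0 by linarith)]
    ring_nf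

lemma expLip (σ : ℝ) (hσ : 0 < σ) {m s t : ℝ} (hs : m ≤ s) (ht : m ≤ t) :
    |Real.exp (-s / σ) - Real.exp (-t / σ)| ≤ Real.exp (-m / σ) / σ * |s - t| := by
  wlog h : t ≤ s generalizing s t
  · rw [abs_sub_comm, abs_sub_comm s t]; exact this ht hs (le_of_not_ge h)
  have h1 : Real.exp (-s / σ) ≤ Real.exp (-t / σ) :=
    exp_le_exp.2 (by apply div_le_div_of_nonneg_right _ hσ.le; linarith)
  rw [abs_of_nonpos (by linarith), abs_of_nonneg (by linarith)]
  have key : Real.exp (-t / σ) - Real.exp (-s / σ)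
      = Real.exp (-t / σ) * (1 - Real.exp (-((s - t) / σ))) := by
    rw [mul_sub, mul_one, ← Real.exp_add]; ring_nf
  rw [neg_sub, key]
  have h2 : 1 - Real.exp (-((s - t) / σ)) ≤ (s - t) / σ := by
    have := Real.add_one_le_exp (-((s - t) / σ)); linarith
  have h3 : Real.exp (-t / σ) ≤ Real.exp (-m / σ) :=
    exp_le_exp.2 (by apply div_le_div_of_nonneg_right _ hσ.le; linarith)
  have h4 : 0 ≤ 1 - Real.exp (-((s - t) / σ)) := by
    have : Real.exp (-((s - t) / σ)) ≤ 1 := by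
      rw [Real.exp_le_one_iff]
      apply neg_nonpos.mpr; exact div_nonneg (by linarith) hσ.le
    linarith
  calc Real.exp (-t / σ) * (1 - Real.exp (-((s-t)/σ)))
      ≤ Real.exp (-m / σ) * ((s - t) / σ) := by
        apply mul_le_mul h3 h2 h4 (exp_pos _).le
    _ = Real.exp (-m / σ) / σ * (s - t) := by ring

lemma intFU (σ : ℝ) (hσ : 0 < σ) (U : ℝ → ℝ) (hmeas : Measurable U)
    (hbdd : ∀ y, |U y| ≤ 1) (t : ℝ) :
    Integrable (fun y => Real.exp (-|t - y| / σ) * U y) := by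
  have hmeasF : AEStronglyMeasurable (fun y => Real.exp (-|t - y| / σ) * U y) volume :=
    (((((measurable_const.sub measurable_id).abs).neg.div_const σ).exp).mul
      hmeas).aestronglyMeasurable
  refine (int_exp_abs σ hσ t).mono hmeasF (Eventually.of_forall fun y => ?_)
  rw [norm_mul, Real.norm_eq_abs, Real.norm_eq_abs, abs_of_nonneg (exp_pos _).le]
  exact mul_le_of_le_one_right (exp_pos _).le (hbdd y)

lemma hasDeriv_inner (σ : ℝ) (hσ : 0 < σ) (U : ℝ → ℝ) (hmeas : Measurable U)
    (hbdd : ∀ y, |U y| ≤ 1) (x : ℝ) :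
    Integrable (fun y => ((if x < y then 1 else -1) / σ) * Real.exp (-|x - y| / σ) * U y) ∧
    HasDerivAt (fun t => ∫ y, Real.exp (-|t - y| / σ) * U y)
      (∫ y, ((if x < y then 1 else -1) / σ) * Real.exp (-|x - y| / σ) * U y) x := by
  have hmeasF : ∀ t : ℝ, AEStronglyMeasurable (fun y => Real.exp (-|t - y| / σ) * U y) volume := by
    intro t
    exact (((((measurable_const.sub measurable_id).abs).neg.div_const σ).exp).mul
      hmeas).aestronglyMeasurable
  refine hasDerivAt_integral_of_dominated_loc_of_lip
    (bound := fun y => Real.exp (1 / σ) / σ * Real.exp (-|x - y| / σ)) (Metric.ball_mem_nhds x one_pos)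
    (Eventually.of_forall fun t => hmeasF t) (intFU σ hσ U hmeas hbdd x) ?_ ?_
    ((int_exp_abs σ hσ x).const_mul _) ?_
  · -- F' measurable
    refine Measurable.aestronglyMeasurable ?_
    refine Measurable.mul (Measurable.mul ?_
      ((((measurable_const.sub measurable_id).abs).neg.div_const σ).exp)) hmeas
    exact Measurable.div_const (Measurable.ite (measurableSet_lt measurable_const measurable_id)
      measurable_const measurable_const) σ
  · -- Lipschitz
    refine Eventually.of_forall fun y => ?_
    rw [lipschitzOnWith_iff_dist_le_mul]
    intro t₁ h₁ t₂ h₂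
    rw [Metric.mem_ball, Real.dist_eq] at h₁ h₂
    rw [Real.dist_eq, Real.dist_eq]
    have hs : |x - y| - 1 ≤ |t₁ - y| := by
      have := abs_sub_abs_le_abs_sub (x - y) (x - t₁)
      have h3 : x - y - (x - t₁) = t₁ - y := by ring
      rw [h3] at this
      have h4 : |x - t₁| < 1 := by rw [abs_sub_comm]; exact h₁
      linarith
    have ht : |x - y| - 1 ≤ |t₂ - y| := by
      have := abs_sub_abs_le_abs_sub (x - y) (x - t₂)
      have h3 : x - y - (x - t₂) = t₂ - y := by ring
      rw [h3] at this
      have h4 : |x - t₂| < 1 := by rw [abs_sub_comm]; exact h₂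
      linarith
    have key := expLip σ hσ hs ht
    have habs : abs (|t₁ - y| - |t₂ - y|) ≤ |t₁ - t₂| := by
      have := abs_abs_sub_abs_le_abs_sub (t₁ - y) (t₂ - y)
      simpa using this
    have hexpm : Real.exp (-(|x - y| - 1) / σ) = Real.exp (1 / σ) * Real.exp (-|x - y| / σ) := by
      rw [← Real.exp_add]
      congr 1
      ring
    calc |Real.exp (-|t₁ - y| / σ) * U y - Real.exp (-|t₂ - y| / σ) * U y|
        = |Real.exp (-|t₁ - y| / σ) - Real.exp (-|t₂ - y| / σ)| * |U y| := by
          rw [← abs_mul]; ring_nf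
      _ ≤ |Real.exp (-|t₁ - y| / σ) - Real.exp (-|t₂ - y| / σ)| * 1 :=
          mul_le_mul_of_nonneg_left (hbdd y) (abs_nonneg _)
      _ = |Real.exp (-|t₁ - y| / σ) - Real.exp (-|t₂ - y| / σ)| := mul_one _
      _ ≤ Real.exp (-(|x - y| - 1) / σ) / σ * abs (|t₁ - y| - |t₂ - y|) := key
      _ ≤ Real.exp (-(|x - y| - 1) / σ) / σ * |t₁ - t₂| := by
          apply mul_le_mul_of_nonneg_left habs
          positivity
      _ = ↑(Real.nnabs (Real.exp (1 / σ) / σ * Real.exp (-|x - y| / σ))) * |t₁ - t₂| := by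
          have hb : (0:ℝ) ≤ Real.exp (1 / σ) / σ * Real.exp (-|x - y| / σ) := by positivity
          rw [Real.coe_nnabs, abs_of_nonneg hb, hexpm]
          ring
  · -- differentiability a.e.
    have hae : ∀ᵐ y : ℝ, y ≠ x := by
      have h0 : volume ({x} : Set ℝ) = 0 := measure_singleton x
      have := (measure_eq_zero_iff_ae_notMem (μ := (volume : Measure ℝ)) (s := {x})).mp h0
      exact this.mono fun y hy => by simpa using hy
    refine hae.mono fun y hy => ?_
    rcases lt_or_gt_of_ne hy with hlt | hgt
    · -- y < x : near x, |t - y| = t - y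
      have hd : HasDerivAt (fun t => Real.exp ((y - t) / σ) * U y)
          (Real.exp ((y - x) / σ) * (-1 / σ) * U y) x := by
        have h1 : HasDerivAt (fun t : ℝ => (y - t) / σ) (-1 / σ) x := by
          simpa using ((hasDerivAt_id x).const_sub y).div_const σ
        exact (h1.exp).mul_const (U y)
      have heq : (fun t => Real.exp (-|t - y| / σ) * U y) =ᶠ[nhds x]
          (fun t => Real.exp ((y - t) / σ) * U y) := by
        filter_upwards [Ioi_mem_nhds hlt] with t ht
        rw [Set.mem_Ioi] at ht
        rw [abs_of_pos (by linarith), neg_sub]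
      have := hd.congr_of_eventuallyEq heq
      convert this using 1
      have hif : ¬ x < y := not_lt.mpr hlt.le
      rw [if_neg hif, abs_of_pos (by linarith : (0:ℝ) < x - y), neg_sub]
      ring
    · -- x < y : near x, |t - y| = y - t
      have hd : HasDerivAt (fun t => Real.exp ((t - y) / σ) * U y)
          (Real.exp ((x - y) / σ) * (1 / σ) * U y) x := by
        have h1 : HasDerivAt (fun t : ℝ => (t - y) / σ) (1 / σ) x := by
          simpa using ((hasDerivAt_id x).sub_const y).div_const σ
        exact (h1.exp).mul_const (U y)
      have heq : (fun t => Real.exp (-|t - y| / σ) * U y) =ᶠ[nhds x]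
          (fun t => Real.exp ((t - y) / σ) * U y) := by
        filter_upwards [Iio_mem_nhds hgt] with t ht
        rw [Set.mem_Iio] at ht
        rw [abs_of_neg (by linarith : t - y < 0), neg_neg]
      have := hd.congr_of_eventuallyEq heq
      convert this using 1
      rw [if_pos hgt, abs_of_neg (by linarith : x - y < 0), neg_neg]
      ring


lemma deriv_P_eq (σ : ℝ) (hσ : 0 < σ) (U : ℝ → ℝ) (hmeas : Measurable U)
    (hbdd : ∀ y, |U y| ≤ 1) (x : ℝ) :
    deriv (P σ U) x = (1 / (2 * σ)) *
      ((-(1 / σ)) * (∫ y in Iic x, Real.exp ((y - x) / σ) * U y)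
        + (1 / σ) * (∫ y in Ioi x, Real.exp ((x - y) / σ) * U y)) := by
  obtain ⟨hint, hder⟩ := hasDeriv_inner σ hσ U hmeas hbdd x
  have hP : HasDerivAt (P σ U)
      ((1 / (2 * σ)) * ∫ y, ((if x < y then 1 else -1) / σ) * Real.exp (-|x - y| / σ) * U y) x :=
    hder.const_mul (1 / (2 * σ))
  rw [hP.deriv]
  congr 1
  rw [← intervalIntegral.integral_Iic_add_Ioi (b := x) hint.integrableOn hint.integrableOn]
  congr 1
  · rw [← integral_const_mul]
    apply setIntegral_congr_fun measurableSet_Iic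
    intro y hy
    rw [Set.mem_Iic] at hy
    simp only [if_neg (not_lt.mpr hy), abs_of_nonneg (sub_nonneg.mpr hy), neg_sub]
    ring
  · rw [← integral_const_mul]
    apply setIntegral_congr_fun measurableSet_Ioi
    intro y hy
    rw [Set.mem_Ioi] at hy
    simp only [if_pos hy, abs_of_neg (show x - y < 0 by linarith), neg_neg]
    ring


end PressureAux

open PressureAux Set Real Filter in

theorem pressure_deriv_gap (σ χ : ℝ) (hσ : 0 < σ) (hχ0 : 0 < χ) (hχ2 : χ < 2)
    (U : ℝ → ℝ) (hmono : Antitone U)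
    (hlb : ∀ z ≤ 0, 2 / (2 + χ) ≤ U z) (hub : ∀ z ≤ 0, U z ≤ 1)
    (hz : ∀ z, 0 < z → U z = 0) :
    ∀ z < σ * Real.log (1 - χ / 2),
      (1 / (2 + χ)) * (1 - χ / 2 - Real.exp (z / σ)) ≤
        σ * (deriv (P σ U) z - deriv (P σ U) 0) ∧
      0 < (1 / (2 + χ)) * (1 - χ / 2 - Real.exp (z / σ)) := by
  intro z hzlt
  have h2χ : (0:ℝ) < 2 + χ := by linarith
  have hχa : (0:ℝ) < 1 - χ / 2 := by linarith
  have hlog : Real.log (1 - χ / 2) < 0 := Real.log_neg hχa (by linarith)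
  have hz0 : z < 0 := lt_of_lt_of_le hzlt (by nlinarith)
  have hexp : Real.exp (z / σ) < 1 - χ / 2 := by
    have h1 : z / σ < Real.log (1 - χ / 2) := by
      rw [div_lt_iff₀ hσ]
      linarith [hzlt, mul_comm σ (Real.log (1 - χ / 2))]
    calc Real.exp (z / σ) < Real.exp (Real.log (1 - χ / 2)) := Real.exp_lt_exp.2 h1
      _ = 1 - χ / 2 := Real.exp_log hχa
  have hpos : 0 < (1 / (2 + χ)) * (1 - χ / 2 - Real.exp (z / σ)) := by
    apply mul_pos (by positivity)
    linarith
  refine ⟨?_, hpos⟩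
  -- facts about U
  have ha : (0:ℝ) < 2 / (2 + χ) := by positivity
  have hU0 : ∀ y, 0 ≤ U y := by
    intro y
    rcases le_or_gt y 0 with h | h
    · linarith [hlb y h]
    · rw [hz y h]
  have hU1 : ∀ y, U y ≤ 1 := by
    intro y
    rcases le_or_gt y 0 with h | h
    · exact hub y h
    · rw [hz y h]; norm_num
  have hbdd : ∀ y, |U y| ≤ 1 := fun y => abs_le.2 ⟨by linarith [hU0 y], hU1 y⟩
  have hmeas : Measurable U := hmono.measurable
  set a := 2 / (2 + χ) with ha_def
  set E := Real.exp (z / σ) with hE_def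
  have hE0 : 0 < E := Real.exp_pos _
  -- the four integrals
  set A := ∫ y in Iic z, Real.exp ((y - z) / σ) * U y with hA_def
  set B := ∫ y in Ioi z, Real.exp ((z - y) / σ) * U y with hB_def
  set C := ∫ y in Iic (0:ℝ), Real.exp ((y - 0) / σ) * U y with hC_def
  set D := ∫ y in Ioi (0:ℝ), Real.exp ((0 - y) / σ) * U y with hD_def
  have hderivz := deriv_P_eq σ hσ U hmeas hbdd z
  have hderiv0 := deriv_P_eq σ hσ U hmeas hbdd 0
  -- integrability pieces
  have hglobz := intFU σ hσ U hmeas hbdd z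
  have hglob0 := intFU σ hσ U hmeas hbdd 0
  have hIicz : IntegrableOn (fun y => Real.exp ((y - z) / σ) * U y) (Iic z) := by
    refine IntegrableOn.congr_fun hglobz.integrableOn ?_ measurableSet_Iic
    intro y hy
    rw [Set.mem_Iic] at hy
    simp only [abs_of_nonneg (sub_nonneg.mpr hy), neg_sub]
  have hIic0 : IntegrableOn (fun y => Real.exp ((y - 0) / σ) * U y) (Iic 0) := by
    refine IntegrableOn.congr_fun hglob0.integrableOn ?_ measurableSet_Iic
    intro y hy
    rw [Set.mem_Iic] at hy
    simp only [abs_of_nonneg (sub_nonneg.mpr hy), neg_sub]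
  have hexpIic : ∀ c : ℝ, IntegrableOn (fun y => Real.exp ((y - c) / σ)) (Iic c) := by
    intro c
    refine IntegrableOn.congr_fun ((intOn σ hσ c).div_const (Real.exp (c / σ))) ?_
      measurableSet_Iic
    intro y _
    simp only [← Real.exp_sub, ← sub_div]
  have hexpIicInt : ∀ c : ℝ, ∫ y in Iic c, Real.exp ((y - c) / σ) = σ := by
    intro c
    have h1 : ∀ y : ℝ, Real.exp ((y - c) / σ) = Real.exp (y / σ) / Real.exp (c / σ) := by
      intro y; rw [← Real.exp_sub, ← sub_div]
    simp_rw [h1]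
    rw [integral_div, intIic σ hσ c]
    field_simp
  -- bound A ≤ σ
  have hAle : A ≤ σ := by
    have := setIntegral_mono_on (hf := hIicz) (hg := hexpIic z) measurableSet_Iic
      (fun y _ => mul_le_of_le_one_right (Real.exp_pos _).le (hU1 y))
    rw [hexpIicInt z] at this
    exact this
  -- bound a * σ ≤ C
  have hCge : a * σ ≤ C := by
    have hfint : IntegrableOn (fun y => a * Real.exp ((y - 0) / σ)) (Iic (0:ℝ)) :=
      (hexpIic 0).const_mul a
    have hmono' := setIntegral_mono_on (hf := hfint) (hg := hIic0) measurableSet_Iic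
      (fun y hy => by
        rw [Set.mem_Iic] at hy
        calc a * Real.exp ((y - 0) / σ) = Real.exp ((y - 0) / σ) * a := mul_comm _ _
          _ ≤ Real.exp ((y - 0) / σ) * U y :=
            mul_le_mul_of_nonneg_left (hlb y hy) (Real.exp_pos _).le)
    have heval : ∫ y in Iic (0:ℝ), a * Real.exp ((y - 0) / σ) = a * σ := by
      rw [integral_const_mul, hexpIicInt 0]
    rw [heval] at hmono'
    exact hmono'
  -- D = 0
  have hD : D = 0 := by
    rw [hD_def]
    rw [setIntegral_congr_fun measurableSet_Ioi
      (g := fun _ => (0:ℝ)) (fun y hy => by rw [hz y hy, mul_zero])]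
    simp
  -- bound B
  have hIoczInt : IntegrableOn (fun y => Real.exp ((z - y) / σ) * U y) (Ioc z 0) := by
    refine IntegrableOn.congr_fun hglobz.integrableOn ?_ measurableSet_Ioc
    intro y hy
    rw [Set.mem_Ioc] at hy
    simp only [abs_of_neg (show z - y < 0 by linarith [hy.1]), neg_neg]
  have hIoiInt : IntegrableOn (fun y => Real.exp ((z - y) / σ) * U y) (Ioi (0:ℝ)) := by
    refine IntegrableOn.congr_fun hglobz.integrableOn ?_ measurableSet_Ioi
    intro y hy
    rw [Set.mem_Ioi] at hy
    simp only [abs_of_neg (show z - y < 0 by linarith), neg_neg]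
  have hIoczVal : ∫ y in Ioc z (0:ℝ), Real.exp ((z - y) / σ) = σ * (1 - E) := by
    rw [← intervalIntegral.integral_of_le hz0.le]
    have hFTC := intervalIntegral.integral_eq_sub_of_hasDerivAt
      (f := fun y => -σ * Real.exp ((z - y) / σ)) (f' := fun y => Real.exp ((z - y) / σ))
      (a := z) (b := 0) ?_ ?_
    · rw [hFTC]
      simp only [sub_zero, sub_self, zero_div, Real.exp_zero]
      rw [hE_def]
      ring
    · intro y _
      have h1 : HasDerivAt (fun t : ℝ => (z - t) / σ) (-1 / σ) y := by
        simpa using ((hasDerivAt_id y).const_sub z).div_const σ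
      have := (h1.exp).const_mul (-σ)
      exact this.congr_deriv (by field_simp)
    · exact (((continuous_const.sub continuous_id).div_const σ).rexp).intervalIntegrable z 0
  have hBge : a * (σ * (1 - E)) ≤ B := by
    have hsplit : B = (∫ y in Ioc z (0:ℝ), Real.exp ((z - y) / σ) * U y)
        + ∫ y in Ioi (0:ℝ), Real.exp ((z - y) / σ) * U y := by
      rw [hB_def, ← Set.Ioc_union_Ioi_eq_Ioi hz0.le]
      exact setIntegral_union (Set.Ioc_disjoint_Ioi le_rfl) measurableSet_Ioi hIoczInt hIoiInt
    have hzero : ∫ y in Ioi (0:ℝ), Real.exp ((z - y) / σ) * U y = 0 := by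
      rw [setIntegral_congr_fun measurableSet_Ioi
        (g := fun _ => (0:ℝ)) (fun y hy => by rw [hz y hy, mul_zero])]
      simp
    have hfint : IntegrableOn (fun y => a * Real.exp ((z - y) / σ)) (Ioc z (0:ℝ)) :=
      ((((continuous_const.sub continuous_id).div_const σ).rexp).integrableOn_Ioc).const_mul a
    have hmono' := setIntegral_mono_on (hf := hfint) (hg := hIoczInt) measurableSet_Ioc
      (fun y hy => by
        rw [Set.mem_Ioc] at hy
        calc a * Real.exp ((z - y) / σ) = Real.exp ((z - y) / σ) * a := mul_comm _ _
          _ ≤ Real.exp ((z - y) / σ) * U y :=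
            mul_le_mul_of_nonneg_left (hlb y hy.2) (Real.exp_pos _).le)
    have heval : ∫ y in Ioc z (0:ℝ), a * Real.exp ((z - y) / σ) = a * (σ * (1 - E)) := by
      rw [integral_const_mul, hIoczVal]
    rw [heval] at hmono'
    rw [hsplit, hzero]
    linarith
  -- assemble
  have hval : σ * (deriv (P σ U) z - deriv (P σ U) 0) = (-A + B + C - D) / (2 * σ) := by
    rw [hderivz, hderiv0, ← hA_def, ← hB_def, ← hC_def, ← hD_def]
    field_simp
    ring
  have hid : (1 / (2 + χ)) * (1 - χ / 2 - E)
      = (-σ + a * (σ * (1 - E)) + a * σ - 0) / (2 * σ) := by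
    rw [ha_def]
    field_simp
    ring
  rw [hval, hid]
  apply div_le_div_of_nonneg_right _ (show (0:ℝ) ≤ 2 * σ by positivity)
  linarith [hAle, hCge, hBge, hD]
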